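/- For x, y ∈ ℝ² with |x| > 4, the inequality |log(|x−y|/|x|)| ≲ 1 + log⟨y⟩ + log⁻(|x−y|) holds, where log⁻(r) = −log(r)·𝟙_{0<r<1}. -/
import Mathlib


open Real

/-- For |x| > 4 one has |log(|x−y|/|x|)| ≲ 1 + log⟨y⟩ + log⁻(|x−y|). -/
theorem log_quotient_estimate :
    ∃ C : ℝ, 0 < C ∧
      ∀ x y : EuclideanSpace ℝ (Fin 2), 4 < ‖x‖ →
        |Real.log (‖x - y‖ / ‖x‖)| ≤
          C * (1 + Real.log (Real.sqrt (1 + ‖y‖ ^ 2)) + max (-Real.log ‖x - y‖) 0) := by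
  refine ⟨2, by norm_num, fun x y hx => ?_⟩
  set a := ‖x‖ with ha_def
  set r := ‖x - y‖ with hr_def
  set t := ‖y‖ with ht_def
  have ht : (0:ℝ) ≤ t := norm_nonneg _
  have ha : (0:ℝ) < a := by linarith
  have hr0 : (0:ℝ) ≤ r := norm_nonneg _
  have hs1 : (1:ℝ) ≤ Real.sqrt (1 + t ^ 2) := by
    have := Real.sqrt_le_sqrt (show (1:ℝ) ≤ 1 + t ^ 2 by nlinarith)
    rwa [Real.sqrt_one] at this
  have hst : t ≤ Real.sqrt (1 + t ^ 2) := by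
    have := Real.sqrt_le_sqrt (show t ^ 2 ≤ 1 + t ^ 2 by nlinarith)
    rwa [Real.sqrt_sq ht] at this
  set L := Real.log (Real.sqrt (1 + t ^ 2)) with hL_def
  have hL : 0 ≤ L := Real.log_nonneg hs1
  have hM : 0 ≤ max (-Real.log r) 0 := le_max_right _ _
  have hlog2 : Real.log 2 < 1 := by
    have := Real.log_two_lt_d9; linarith
  have h1t : Real.log (1 + t) ≤ Real.log 2 + L := by
    rw [← Real.log_mul (by norm_num) (by positivity)]
    exact Real.log_le_log (by linarith) (by nlinarith)
  have htri1 : r ≤ a + t := norm_sub_le x y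
  have htri2 : a ≤ r + t := by
    calc a = ‖(x - y) + y‖ := by rw [sub_add_cancel]
    _ ≤ r + t := norm_add_le _ _
  rcases eq_or_lt_of_le hr0 with hr | hr
  · rw [← hr]
    simp only [zero_div, Real.log_zero, abs_zero, neg_zero, max_self]
    nlinarith
  · rw [abs_le, Real.log_div (ne_of_gt hr) (ne_of_gt ha)]
    constructor
    · rcases le_or_gt 1 r with h1 | h1
      · have : Real.log a ≤ Real.log r + Real.log (1 + t) := by
          rw [← Real.log_mul (by linarith) (by linarith)]
          exact Real.log_le_log ha (by nlinarith)
        linarith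
      · have hMr : max (-Real.log r) 0 = -Real.log r :=
          max_eq_left (by linarith [Real.log_neg hr h1])
        have hlr : Real.log r < 0 := Real.log_neg hr h1
        have : Real.log a ≤ Real.log (1 + t) :=
          Real.log_le_log ha (by linarith)
        rw [hMr]
        linarith
    · have : Real.log r ≤ Real.log a + Real.log (1 + t) := by
        rw [← Real.log_mul (by linarith) (by linarith)]
        exact Real.log_le_log hr (by nlinarith)
      linarith
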